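/- Let F ⊊ G be nonempty faces of a convex set in a finite-dimensional real vector space with F strictly contained in G. Then the dimension of the affine span of F is strictly less than the dimension of the affine span of G. -/

import Mathlib

variable {V : Type*} [NormedAddCommGroup V] [NormedSpace ℝ V] [FiniteDimensional ℝ V]

/-- `F` is a face (extreme subset) of the convex set `B`. -/
def IsFace (B F : Set V) : Prop :=
  F ⊆ B ∧ Convex ℝ F ∧
    ∀ u ∈ B, ∀ w ∈ B, ∀ t : ℝ, t ∈ Set.Ioo (0 : ℝ) 1 →
      t • u + (1 - t) • w ∈ F → u ∈ F ∧ w ∈ F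

omit [FiniteDimensional ℝ V] in
/-- From an intrinsic interior point `y` of `F`, one can move slightly away from any point
`x` of the affine span of `F` and stay inside `F`. -/
lemma exists_pos_add_smul_sub_mem (F : Set V) {y x : V}
    (hy : y ∈ intrinsicInterior ℝ F) (hx : x ∈ affineSpan ℝ F) :
    ∃ ε : ℝ, 0 < ε ∧ y + ε • (y - x) ∈ F := by
  obtain ⟨y', hy', rfl⟩ := mem_intrinsicInterior.1 hy
  rw [mem_interior_iff_mem_nhds, Metric.mem_nhds_iff] at hy'
  obtain ⟨δ, hδ, hball⟩ := hy'
  by_cases hxy : x = (y' : V)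
  · exact ⟨1, one_pos, by simpa [hxy] using hball (Metric.mem_ball_self hδ)⟩
  · have hnorm : 0 < ‖(y' : V) - x‖ := by
      rw [norm_pos_iff, sub_ne_zero]; exact fun h => hxy h.symm
    refine ⟨δ / (2 * ‖(y' : V) - x‖), by positivity, ?_⟩
    set ε : ℝ := δ / (2 * ‖(y' : V) - x‖) with hε
    have hεpos : 0 < ε := by positivity
    have hzspan : (y' : V) + ε • ((y' : V) - x) ∈ affineSpan ℝ F := by
      have hdir : ε • ((y' : V) - x) ∈ (affineSpan ℝ F).direction :=
        Submodule.smul_mem _ _ (AffineSubspace.vsub_mem_direction y'.2 hx)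
      have := AffineSubspace.vadd_mem_of_mem_direction hdir y'.2
      simpa [vadd_eq_add, add_comm] using this
    have hdist : dist (⟨(y' : V) + ε • ((y' : V) - x), hzspan⟩ : affineSpan ℝ F) y' < δ := by
      rw [Subtype.dist_eq]
      simp only [dist_eq_norm, add_sub_cancel_left, norm_smul, Real.norm_eq_abs,
        abs_of_pos hεpos]
      have hne' : ‖(y' : V) - x‖ ≠ 0 := ne_of_gt hnorm
      have : ε * ‖(y' : V) - x‖ = δ / 2 := by rw [hε]; field_simp
      rw [this]; linarith
    exact hball hdist

theorem strict_face_dim_lt (B F G : Set V) (hB : Convex ℝ B)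
    (hF : IsFace B F) (hG : IsFace B G) (hFne : F.Nonempty) (hGne : G.Nonempty)
    (hFG : F ⊆ G) (hne : F ≠ G) :
    Module.finrank ℝ (affineSpan ℝ F).direction <
      Module.finrank ℝ (affineSpan ℝ G).direction := by
  by_contra h
  push_neg at h
  have hle : affineSpan ℝ F ≤ affineSpan ℝ G := affineSpan_mono ℝ hFG
  have hdir : (affineSpan ℝ F).direction = (affineSpan ℝ G).direction :=
    Submodule.eq_of_le_of_finrank_le (AffineSubspace.direction_le hle) h
  obtain ⟨p, hp⟩ := id hFne
  have hspan : affineSpan ℝ F = affineSpan ℝ G :=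
    (AffineSubspace.eq_iff_direction_eq_of_mem (subset_affineSpan ℝ F hp)
      (subset_affineSpan ℝ G (hFG hp))).2 hdir
  apply hne
  refine Set.Subset.antisymm hFG fun x hxG => ?_
  obtain ⟨y, hy⟩ := Set.Nonempty.intrinsicInterior hF.2.1 hFne
  have hx : x ∈ affineSpan ℝ F := hspan ▸ subset_affineSpan ℝ G hxG
  obtain ⟨ε, hεpos, hz⟩ := exists_pos_add_smul_sub_mem F hy hx
  set z : V := y + ε • (y - x) with hzdef
  have h1ε : (0:ℝ) < 1 + ε := by linarith
  have ht : ε / (1 + ε) ∈ Set.Ioo (0:ℝ) 1 := by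
    constructor
    · positivity
    · rw [div_lt_one h1ε]; linarith
  have hkey : (ε / (1 + ε)) • x + (1 - ε / (1 + ε)) • z ∈ F := by
    have heq : (ε / (1 + ε)) • x + (1 - ε / (1 + ε)) • z = y := by
      rw [hzdef]
      match_scalars <;> field_simp <;> ring
    rw [heq]
    exact intrinsicInterior_subset hy
  exact (hF.2.2 x (hG.1 hxG) z (hF.1 hz) _ ht hkey).1
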